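/- Let R be a G-graded ring and I a homogeneous ideal of R that is graded-nil (every homogeneous element of I is nilpotent). Then R is graded nil clean if and only if the quotient G-graded ring R/I is graded nil clean. -/

import Mathlib

/-- A `G`-grading of a ring `R`: a family of additive subgroups `C g` with
`C g * C h ⊆ C (g*h)`, `1 ∈ C e`, and `R = ⊕_g C g` (internal direct sum). -/
structure Grading (G : Type*) [Group G] [DecidableEq G] (R : Type*) [Ring R] where
  C : G → AddSubgroup R
  one_mem : (1 : R) ∈ C 1
  mul_mem : ∀ {g h : G} {a b : R}, a ∈ C g → b ∈ C h → a * b ∈ C (g * h)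
  isInternal : DirectSum.IsInternal C

namespace Grading

variable {G : Type*} [Group G] [DecidableEq G] {R : Type*} [Ring R]

/-- An element is homogeneous if it lies in some component. -/
def Homogeneous (A : Grading G R) (a : R) : Prop := ∃ g, a ∈ A.C g

/-- A homogeneous element is graded nil clean if it is the sum of a homogeneous
idempotent and a homogeneous nilpotent. -/
def IsGradedNilClean (A : Grading G R) (a : R) : Prop :=
  ∃ f b : R, A.Homogeneous f ∧ IsIdempotentElem f ∧ A.Homogeneous b ∧
    IsNilpotent b ∧ a = f + b

/-- A graded ring is graded nil clean if every homogeneous element is. -/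
def GradedNilClean (A : Grading G R) : Prop :=
  ∀ a : R, A.Homogeneous a → A.IsGradedNilClean a

/-- Graded strongly nil clean element: the idempotent and nilpotent commute. -/
def IsGradedStronglyNilClean (A : Grading G R) (a : R) : Prop :=
  ∃ f b : R, A.Homogeneous f ∧ IsIdempotentElem f ∧ A.Homogeneous b ∧
    IsNilpotent b ∧ f * b = b * f ∧ a = f + b

def GradedStronglyNilClean (A : Grading G R) : Prop :=
  ∀ a : R, A.Homogeneous a → A.IsGradedStronglyNilClean a

end Grading

namespace Grading

variable {G : Type*} [Group G] [DecidableEq G] {R : Type*} [Ring R]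

/-- A two-sided ideal, viewed as an additive subgroup. -/
def tiAddSubgroup (I : TwoSidedIdeal R) : AddSubgroup R where
  carrier := I
  add_mem' := fun h1 h2 => I.add_mem h1 h2
  zero_mem' := I.zero_mem
  neg_mem' := fun h => I.neg_mem h

/-- A two-sided ideal is homogeneous if each of its elements lies in the sum of
the intersections `I ∩ R_g`, i.e. `I = ⊕_g (I ∩ R_g)`. -/
def HomogeneousTI (A : Grading G R) (I : TwoSidedIdeal R) : Prop :=
  ∀ a ∈ I, a ∈ ⨆ g : G, (A.C g ⊓ tiAddSubgroup I)

/-- The `g`-component of the quotient grading on `R/I`: the image of `R_g`. -/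
def quotC (A : Grading G R) (I : TwoSidedIdeal R) (g : G) :
    AddSubgroup I.ringCon.Quotient :=
  (A.C g).map (I.ringCon.mk' : R →+* I.ringCon.Quotient).toAddMonoidHom

/-- Homogeneous elements of the quotient graded ring `R/I`. -/
def QuotHomogeneous (A : Grading G R) (I : TwoSidedIdeal R)
    (a : I.ringCon.Quotient) : Prop :=
  ∃ g, a ∈ A.quotC I g

/-- The quotient graded ring `R/I` is graded nil clean. -/
def QuotGradedNilClean (A : Grading G R) (I : TwoSidedIdeal R) : Prop :=
  ∀ a : I.ringCon.Quotient, A.QuotHomogeneous I a →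
    ∃ f b : I.ringCon.Quotient, A.QuotHomogeneous I f ∧ IsIdempotentElem f ∧
      A.QuotHomogeneous I b ∧ IsNilpotent b ∧ a = f + b

/-- A quotient element is graded strongly nil clean. -/
def QuotIsGradedStronglyNilClean (A : Grading G R) (I : TwoSidedIdeal R)
    (a : I.ringCon.Quotient) : Prop :=
  ∃ f b : I.ringCon.Quotient, A.QuotHomogeneous I f ∧ IsIdempotentElem f ∧
    A.QuotHomogeneous I b ∧ IsNilpotent b ∧ f * b = b * f ∧ a = f + b

/-- The quotient graded ring `R/I` is graded strongly nil clean. -/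
def QuotGradedStronglyNilClean (A : Grading G R) (I : TwoSidedIdeal R) : Prop :=
  ∀ a : I.ringCon.Quotient, A.QuotHomogeneous I a →
    A.QuotIsGradedStronglyNilClean I a

/-- The ideal `I` is nilpotent: some power `I^n` vanishes, i.e. every product of
`n` elements of `I` is zero. -/
def NilpotentTI (I : TwoSidedIdeal R) : Prop :=
  ∃ n : ℕ, 0 < n ∧ ∀ x : Fin n → R, (∀ i, x i ∈ I) → (List.ofFn x).prod = 0

end Grading

section Aux

open DirectSum

namespace Grading

variable {G : Type*} [Group G] [DecidableEq G] {R : Type*} [Ring R]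

noncomputable def decompEquiv (A : Grading G R) : (⨁ g, A.C g) ≃+ R :=
  AddEquiv.ofBijective (DirectSum.coeAddMonoidHom A.C) A.isInternal

noncomputable def projHom (A : Grading G R) (g : G) : R →+ R :=
  ((A.C g).subtype.comp (DFinsupp.evalAddMonoidHom g)).comp A.decompEquiv.symm.toAddMonoidHom

noncomputable def proj (A : Grading G R) (g : G) (x : R) : R := A.projHom g x

lemma proj_eq (A : Grading G R) (g : G) (x : R) :
    A.proj g x = (A.decompEquiv.symm x g : R) := rfl

lemma proj_mem (A : Grading G R) (g : G) (x : R) : A.proj g x ∈ A.C g :=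
  (A.decompEquiv.symm x g).2

lemma proj_add (A : Grading G R) (g : G) (x y : R) :
    A.proj g (x + y) = A.proj g x + A.proj g y := map_add (A.projHom g) x y

lemma proj_neg (A : Grading G R) (g : G) (x : R) :
    A.proj g (-x) = -A.proj g x := map_neg (A.projHom g) x

lemma proj_sub (A : Grading G R) (g : G) (x y : R) :
    A.proj g (x - y) = A.proj g x - A.proj g y := map_sub (A.projHom g) x y

lemma proj_of_mem (A : Grading G R) {g : G} {y : R} (hy : y ∈ A.C g) :
    A.proj g y = y := by
  have h : A.decompEquiv.symm y = DirectSum.of (fun i => A.C i) g ⟨y, hy⟩ := by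
    rw [AddEquiv.symm_apply_eq]
    exact (DirectSum.coeAddMonoidHom_of A.C g ⟨y, hy⟩).symm
  rw [A.proj_eq, h, DirectSum.of_eq_same]

lemma proj_of_mem_ne (A : Grading G R) {g h : G} {y : R} (hne : h ≠ g) (hy : y ∈ A.C h) :
    A.proj g y = 0 := by
  have heq : A.decompEquiv.symm y = DirectSum.of (fun i => A.C i) h ⟨y, hy⟩ := by
    rw [AddEquiv.symm_apply_eq]
    exact (DirectSum.coeAddMonoidHom_of A.C h ⟨y, hy⟩).symm
  rw [A.proj_eq, heq, DirectSum.of_eq_of_ne _ _ _ hne.symm]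
  rfl

lemma proj_mem_of_mem_ideal {A : Grading G R} {I : TwoSidedIdeal R}
    (hhom : A.HomogeneousTI I) {x : R} (hx : x ∈ I) (g : G) : A.proj g x ∈ I := by
  refine AddSubgroup.iSup_induction (C := fun z => A.proj g z ∈ I)
    (fun h => A.C h ⊓ tiAddSubgroup I) (hhom x hx) ?_ ?_ ?_
  · intro h y hy
    rw [AddSubgroup.mem_inf] at hy
    by_cases hgh : h = g
    · rw [A.proj_of_mem (hgh ▸ hy.1)]; exact hy.2
    · rw [A.proj_of_mem_ne hgh hy.1]; exact I.zero_mem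
  · show A.proj g 0 ∈ I
    rw [show A.proj g 0 = 0 from map_zero (A.projHom g)]
    exact I.zero_mem
  · intro a b ha hb
    rw [A.proj_add]; exact I.add_mem ha hb

end Grading
end Aux
section Aux2
namespace Grading

variable {G : Type*} [Group G] [DecidableEq G] {R : Type*} [Ring R]

lemma mk_eq_zero_iff (I : TwoSidedIdeal R) (x : R) :
    I.ringCon.mk' x = 0 ↔ x ∈ I := by
  rw [show (0 : I.ringCon.Quotient) = I.ringCon.mk' 0 from (map_zero _).symm]
  exact (RingCon.eq I.ringCon).trans (TwoSidedIdeal.mem_iff I x).symm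

lemma pow_mem (A : Grading G R) {g : G} {a : R} (ha : a ∈ A.C g) (n : ℕ) :
    a ^ n ∈ A.C (g ^ n) := by
  induction n with
  | zero => simpa using A.one_mem
  | succ k ih => rw [pow_succ, pow_succ]; exact A.mul_mem ih ha

lemma pow_mem_one (A : Grading G R) {a : R} (ha : a ∈ A.C 1) (n : ℕ) :
    a ^ n ∈ A.C 1 := by simpa using A.pow_mem ha n

lemma mul_mem_one (A : Grading G R) {a b : R} (ha : a ∈ A.C 1) (hb : b ∈ A.C 1) :
    a * b ∈ A.C 1 := by simpa using A.mul_mem ha hb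

lemma nilpotent_of_quot {A : Grading G R} {I : TwoSidedIdeal R}
    (hnil : ∀ a ∈ I, A.Homogeneous a → IsNilpotent a) {a : R} {g : G}
    (ha : a ∈ A.C g) (h : IsNilpotent (I.ringCon.mk' a)) : IsNilpotent a := by
  obtain ⟨n, hn⟩ := h
  have han : a ^ n ∈ I := by
    rw [← mk_eq_zero_iff I, map_pow]; exact hn
  obtain ⟨m, hm⟩ := hnil _ han ⟨g ^ n, A.pow_mem ha n⟩
  exact ⟨n * m, by rw [pow_mul, hm]⟩

/-- `(y*y - y) ∣ (y^(k+1) - y)` in a commutative ring. -/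
lemma sq_sub_dvd_pow_sub {S : Type*} [CommRing S] (y : S) (k : ℕ) :
    (y * y - y) ∣ (y ^ (k + 1) - y) := by
  obtain ⟨c, hc⟩ := sub_dvd_pow_sub_pow y 1 k
  refine ⟨c, ?_⟩
  have h1 : y ^ (k + 1) - y = y * (y ^ k - 1 ^ k) := by ring
  rw [h1, hc]; ring

lemma key_dvd (n : ℕ) :
    (Polynomial.X * Polynomial.X - Polynomial.X : Polynomial ℤ) ∣
      (1 - (1 - Polynomial.X ^ (n + 1)) ^ (n + 1) - Polynomial.X) := by
  have h1 : (Polynomial.X * Polynomial.X - Polynomial.X : Polynomial ℤ) ∣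
      (Polynomial.X ^ (n + 1) - Polynomial.X) := sq_sub_dvd_pow_sub _ n
  have h2 : (Polynomial.X * Polynomial.X - Polynomial.X : Polynomial ℤ) ∣
      (Polynomial.X ^ (2 * n + 1 + 1) - Polynomial.X) := sq_sub_dvd_pow_sub _ (2 * n + 1)
  have hz2 : (Polynomial.X * Polynomial.X - Polynomial.X : Polynomial ℤ) ∣
      ((1 - Polynomial.X ^ (n + 1)) * (1 - Polynomial.X ^ (n + 1)) -
        (1 - Polynomial.X ^ (n + 1))) := by
    have e : ((1 : Polynomial ℤ) - Polynomial.X ^ (n + 1)) * (1 - Polynomial.X ^ (n + 1)) -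
        (1 - Polynomial.X ^ (n + 1)) =
        (Polynomial.X ^ (2 * n + 1 + 1) - Polynomial.X) -
          (Polynomial.X ^ (n + 1) - Polynomial.X) := by ring
    rw [e]
    exact dvd_sub h2 h1
  have hzn : (Polynomial.X * Polynomial.X - Polynomial.X : Polynomial ℤ) ∣
      ((1 - Polynomial.X ^ (n + 1)) ^ (n + 1) - (1 - Polynomial.X ^ (n + 1))) :=
    dvd_trans hz2 (sq_sub_dvd_pow_sub _ n)
  have e2 : (1 : Polynomial ℤ) - (1 - Polynomial.X ^ (n + 1)) ^ (n + 1) - Polynomial.X =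
      (Polynomial.X ^ (n + 1) - Polynomial.X) -
        ((1 - Polynomial.X ^ (n + 1)) ^ (n + 1) - (1 - Polynomial.X ^ (n + 1))) := by ring
  rw [e2]
  exact dvd_sub h1 hzn

/-- Idempotent lifting within `C 1`. -/
lemma lift_idem (A : Grading G R) (I : TwoSidedIdeal R) {f : R}
    (hC1 : f ∈ A.C 1) (hfI : f * f - f ∈ I) (hnilp : IsNilpotent (f * f - f)) :
    ∃ e : R, e ∈ A.C 1 ∧ IsIdempotentElem e ∧ e - f ∈ I := by
  obtain ⟨n, hn⟩ := hnilp
  have hm : (f - f ^ 2) ^ (n + 1) = 0 := by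
    have h1 : f - f ^ 2 = -(f * f - f) := by noncomm_ring
    rw [h1, neg_pow, pow_succ (f * f - f), ← mul_assoc, hn, mul_zero, zero_mul]
  have hidem := isIdempotentElem_one_sub_one_sub_pow_pow (f : R) (n + 1) hm
  refine ⟨1 - (1 - f ^ (n+1)) ^ (n+1), ?_, hidem, ?_⟩
  · exact (A.C 1).sub_mem A.one_mem
      (A.pow_mem_one ((A.C 1).sub_mem A.one_mem (A.pow_mem_one hC1 _)) _)
  · obtain ⟨q, hq⟩ := key_dvd n
    have := congrArg (Polynomial.aeval (f : R)) hq
    simp only [map_sub, map_one, map_mul, map_pow, Polynomial.aeval_X] at this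
    rw [this]
    exact I.mul_mem_right _ _ hfI

end Grading
end Aux2
/-- Let `I` be a homogeneous graded-nil two-sided ideal of a `G`-graded ring `R`.
Then `R` is graded nil clean iff `R/I` is graded nil clean. -/
theorem stmt4 {G : Type*} [Group G] [DecidableEq G] {R : Type*} [Ring R]
    (A : Grading G R) (I : TwoSidedIdeal R) (hhom : A.HomogeneousTI I)
    (hnil : ∀ a ∈ I, A.Homogeneous a → IsNilpotent a) :
    A.GradedNilClean ↔ A.QuotGradedNilClean I := by
  constructor
  · intro hR x hx
    obtain ⟨g, hg⟩ := hx
    obtain ⟨y, hy, rfl⟩ := AddSubgroup.mem_map.mp hg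
    obtain ⟨f, b, ⟨gf, hf⟩, hfe, ⟨gb, hb⟩, hbn, hsum⟩ := hR y ⟨g, hy⟩
    refine ⟨I.ringCon.mk' f, I.ringCon.mk' b,
      ⟨gf, AddSubgroup.mem_map_of_mem _ hf⟩, ?_,
      ⟨gb, AddSubgroup.mem_map_of_mem _ hb⟩, hbn.map _, ?_⟩
    · show I.ringCon.mk' f * I.ringCon.mk' f = I.ringCon.mk' f
      rw [← map_mul, hfe.eq]
    · show I.ringCon.mk'.toAddMonoidHom y = _
      simp only [RingHom.toAddMonoidHom_eq_coe, AddMonoidHom.coe_coe]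
      rw [hsum, map_add]
  · intro hQ a ha
    obtain ⟨g, hg⟩ := ha
    have haq : A.QuotHomogeneous I (I.ringCon.mk' a) :=
      ⟨g, AddSubgroup.mem_map_of_mem _ hg⟩
    obtain ⟨fq, bq, ⟨h1, hfq⟩, hfe, ⟨k, hbq⟩, hbn, hsum⟩ := hQ _ haq
    obtain ⟨f, hf, rfl⟩ := AddSubgroup.mem_map.mp hfq
    obtain ⟨b, hb, rfl⟩ := AddSubgroup.mem_map.mp hbq
    simp only [RingHom.toAddMonoidHom_eq_coe, AddMonoidHom.coe_coe] at hsum hfe hbn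
    have base : IsNilpotent a → A.IsGradedNilClean a := fun hna =>
      ⟨0, a, ⟨1, (A.C 1).zero_mem⟩, IsIdempotentElem.zero, ⟨g, hg⟩, hna, (zero_add a).symm⟩
    have hs : a - f - b ∈ I := by
      rw [← Grading.mk_eq_zero_iff I, map_sub, map_sub, hsum]
      abel
    by_cases hf0 : I.ringCon.mk' f = 0
    · apply base
      apply Grading.nilpotent_of_quot hnil hg
      rw [hsum, hf0, zero_add]
      exact hbn
    · have hff : f * f - f ∈ I := by
        rw [← Grading.mk_eq_zero_iff I, map_sub, map_mul, hfe.eq, sub_self]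
      have h11 : h1 = 1 := by
        by_contra hne
        apply hf0
        rw [Grading.mk_eq_zero_iff]
        have hne2 : h1 * h1 ≠ h1 := fun hcon => hne (mul_left_cancel
          (show h1 * h1 = h1 * 1 by rw [mul_one, hcon]))
        have hmem := Grading.proj_mem_of_mem_ideal hhom hff h1
        rw [A.proj_sub, A.proj_of_mem hf, A.proj_of_mem_ne hne2 (A.mul_mem hf hf)] at hmem
        rw [zero_sub] at hmem
        simpa using I.neg_mem hmem
      subst h11
      by_cases hg1 : g = 1
      · subst hg1
        have hffhom : A.Homogeneous (f * f - f) :=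
          ⟨1, (A.C 1).sub_mem (A.mul_mem_one hf hf) hf⟩
        obtain ⟨e, he1, heidem, hef⟩ := A.lift_idem I hf hff (hnil _ hff hffhom)
        refine ⟨e, a - e, ⟨1, he1⟩, heidem, ⟨1, (A.C 1).sub_mem hg he1⟩, ?_, by abel⟩
        apply Grading.nilpotent_of_quot hnil ((A.C 1).sub_mem hg he1)
        have hmke : I.ringCon.mk' e = I.ringCon.mk' f := by
          rw [← sub_eq_zero, ← map_sub]
          exact (Grading.mk_eq_zero_iff I _).mpr hef
        have heq : I.ringCon.mk' (a - e) = I.ringCon.mk' b := by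
          rw [map_sub, hsum, hmke]
          abel
        rw [heq]
        exact hbn
      · apply base
        by_cases hk : k = 1
        · subst hk
          have hmem := Grading.proj_mem_of_mem_ideal hhom hs g
          rw [A.proj_sub, A.proj_sub, A.proj_of_mem hg,
            A.proj_of_mem_ne (fun h => hg1 h.symm) hf,
            A.proj_of_mem_ne (fun h => hg1 h.symm) hb, sub_zero, sub_zero] at hmem
          exact hnil _ hmem ⟨g, hg⟩
        · exfalso
          apply hf0
          rw [Grading.mk_eq_zero_iff]
          have hmem := Grading.proj_mem_of_mem_ideal hhom hs 1
          rw [A.proj_sub, A.proj_sub, A.proj_of_mem_ne hg1 hg, A.proj_of_mem hf,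
            A.proj_of_mem_ne hk hb, sub_zero, zero_sub] at hmem
          simpa using I.neg_mem hmem
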